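/- Let (X, ℰ_v) be a rooted tree and ℰ_h a symmetric set of horizontal edges such that (x,y) ∈ ℰ_h implies |x| = |y| and either x⁻ = y⁻ or (x⁻,y⁻) ∈ ℰ_h (where x⁻ is the parent of x). If the lengths of horizontal geodesics in (X, ℰ_v ∪ ℰ_h) are uniformly bounded by a constant M, then X is Gromov hyperbolic with δ depending only on M. -/

import Mathlib

/-- The augmented tree graph: vertical edges given by the parent map `p`,
together with horizontal edges `Eh`. -/
def augmentedGraph {X : Type*} (p : X → X) (Eh : X → X → Prop) : SimpleGraph X where
  Adj x y := x ≠ y ∧ (p x = y ∨ p y = x ∨ Eh x y ∨ Eh y x)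
  symm := by
    constructor
    intro x y h
    refine ⟨h.1.symm, ?_⟩
    rcases h.2 with h' | h' | h' | h' <;> tauto
  loopless := ⟨fun x h => h.1 rfl⟩

section Aux

open SimpleGraph Function

variable {X : Type*} {o : X} {p : X → X} {lvl : X → ℕ} {Eh : X → X → Prop}

private lemma aug_adj_iff {x y : X} :
    (augmentedGraph p Eh).Adj x y ↔ x ≠ y ∧ (p x = y ∨ p y = x ∨ Eh x y ∨ Eh y x) :=
  Iff.rfl

private lemma root_of_lvl_zero (hlvl : ∀ x, x ≠ o → lvl (p x) + 1 = lvl x)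
    {x : X} (hx : lvl x = 0) : x = o := by
  by_contra h
  have := hlvl x h
  omega

private lemma lvl_iterate (hroot : lvl o = 0)
    (hlvl : ∀ x, x ≠ o → lvl (p x) + 1 = lvl x) :
    ∀ (k : ℕ) {x : X}, k ≤ lvl x → lvl (p^[k] x) + k = lvl x := by
  intro k
  induction k with
  | zero => simp
  | succ k ih =>
    intro x hk
    have h1 : lvl (p^[k] x) + k = lvl x := ih (by omega)
    have h2 : p^[k] x ≠ o := by
      intro h
      rw [h, hroot] at h1
      omega
    have h3 := hlvl _ h2
    rw [Function.iterate_succ_apply']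
    omega

private lemma descent_walk (hroot : lvl o = 0)
    (hlvl : ∀ x, x ≠ o → lvl (p x) + 1 = lvl x) :
    ∀ (k : ℕ) {x : X}, k ≤ lvl x →
      ∃ w : (augmentedGraph p Eh).Walk x (p^[k] x), w.length = k := by
  intro k
  induction k with
  | zero => intro x _; exact ⟨SimpleGraph.Walk.nil, rfl⟩
  | succ k ih =>
    intro x hk
    have hxo : x ≠ o := by
      intro h; rw [h, hroot] at hk; omega
    have hpx : lvl (p x) + 1 = lvl x := hlvl x hxo
    have hne : x ≠ p x := by
      intro h; rw [← h] at hpx; omega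
    obtain ⟨w, hw⟩ := ih (x := p x) (by omega)
    refine ⟨SimpleGraph.Walk.cons (aug_adj_iff.mpr ⟨hne, Or.inl rfl⟩)
      (w.copy rfl (Function.iterate_succ_apply p k x).symm), ?_⟩
    simp [hw]

private lemma adj_lvl (hroot : lvl o = 0) (hproot : p o = o)
    (hlvl : ∀ x, x ≠ o → lvl (p x) + 1 = lvl x)
    (hEh : ∀ x y, Eh x y → lvl x = lvl y ∧ (p x = p y ∨ Eh (p x) (p y)))
    {x y : X} (h : (augmentedGraph p Eh).Adj x y) : lvl y ≤ lvl x + 1 := by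
  obtain ⟨hne, h2⟩ := aug_adj_iff.mp h
  rcases h2 with h' | h' | h' | h'
  · have hxo : x ≠ o := by
      intro e; apply hne; rw [e] at h' ⊢; rw [hproot] at h'; exact h'
    have := hlvl x hxo; rw [h'] at this; omega
  · have hyo : y ≠ o := by
      intro e; apply hne; rw [e] at h'; rw [e, ← h', hproot]
    have := hlvl y hyo; rw [h'] at this; omega
  · have := (hEh x y h').1; omega
  · have := (hEh y x h').1; omega

private lemma walk_lvl_le (hroot : lvl o = 0) (hproot : p o = o)
    (hlvl : ∀ x, x ≠ o → lvl (p x) + 1 = lvl x)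
    (hEh : ∀ x y, Eh x y → lvl x = lvl y ∧ (p x = p y ∨ Eh (p x) (p y)))
    {x y : X} (w : (augmentedGraph p Eh).Walk x y) : lvl y ≤ lvl x + w.length := by
  induction w with
  | nil => simp
  | cons hadj rest ih =>
    have := adj_lvl hroot hproot hlvl hEh hadj
    rw [SimpleGraph.Walk.length_cons]
    omega

private lemma dist_root (hroot : lvl o = 0) (hproot : p o = o)
    (hlvl : ∀ x, x ≠ o → lvl (p x) + 1 = lvl x)
    (hEh : ∀ x y, Eh x y → lvl x = lvl y ∧ (p x = p y ∨ Eh (p x) (p y)))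
    (hconn : (augmentedGraph p Eh).Connected) (x : X) :
    (augmentedGraph p Eh).dist o x = lvl x := by
  refine le_antisymm ?_ ?_
  · obtain ⟨w, hw⟩ := descent_walk (Eh := Eh) hroot hlvl (lvl x) (le_refl _)
    have h0 : lvl (p^[lvl x] x) + lvl x = lvl x := lvl_iterate hroot hlvl (lvl x) (le_refl _)
    have h1 : p^[lvl x] x = o := root_of_lvl_zero hlvl (by omega)
    rw [SimpleGraph.dist_comm]
    calc (augmentedGraph p Eh).dist x o ≤ (w.copy rfl h1).length := SimpleGraph.dist_le _
    _ = lvl x := by simpa using hw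
  · obtain ⟨w, hw⟩ := hconn.exists_walk_length_eq_dist o x
    have := walk_lvl_le hroot hproot hlvl hEh w
    omega

private lemma eh_iterate
    (hEh : ∀ x y, Eh x y → lvl x = lvl y ∧ (p x = p y ∨ Eh (p x) (p y))) :
    ∀ (k : ℕ) {x y : X}, Eh x y → p^[k] x = p^[k] y ∨ Eh (p^[k] x) (p^[k] y) := by
  intro k
  induction k with
  | zero => intro x y h; exact Or.inr h
  | succ k ih =>
    intro x y h
    rw [Function.iterate_succ_apply', Function.iterate_succ_apply']
    rcases ih h with h' | h'
    · rw [h']; exact Or.inl rfl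
    · exact (hEh _ _ h').2

private lemma horiz_of_adj (hroot : lvl o = 0)
    (hlvl : ∀ x, x ≠ o → lvl (p x) + 1 = lvl x)
    {a b : X} (h : (augmentedGraph p Eh).Adj a b) (hl : lvl a = lvl b) :
    Eh a b ∨ Eh b a := by
  obtain ⟨hne, h2⟩ := aug_adj_iff.mp h
  rcases h2 with h' | h' | h' | h'
  · exfalso
    have hao : a ≠ o := by
      intro e
      apply hne
      have hb : lvl b = 0 := by rw [← hl, e, hroot]
      rw [e, root_of_lvl_zero hlvl hb]
    have := hlvl a hao; rw [h'] at this; omega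
  · exfalso
    have hbo : b ≠ o := by
      intro e
      apply hne
      have ha : lvl a = 0 := by rw [hl, e, hroot]
      rw [e, root_of_lvl_zero hlvl ha]
    have := hlvl b hbo; rw [h'] at this; omega
  · exact Or.inl h'
  · exact Or.inr h'

private lemma horiz_project (hroot : lvl o = 0)
    (hlvl : ∀ x, x ≠ o → lvl (p x) + 1 = lvl x)
    (hEhsymm : Symmetric Eh)
    (hEh : ∀ x y, Eh x y → lvl x = lvl y ∧ (p x = p y ∨ Eh (p x) (p y)))
    (hEhne : ∀ x, ¬ Eh x x) :
    ∀ {u v : X} (w : (augmentedGraph p Eh).Walk u v) (m : ℕ),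
      (∀ a ∈ w.support, lvl a = m + 1) →
      ∃ w' : (augmentedGraph p Eh).Walk (p u) (p v),
        w'.length ≤ w.length ∧ ∀ a ∈ w'.support, lvl a = m := by
  intro u v w
  induction w with
  | @nil u =>
    intro m hm
    refine ⟨SimpleGraph.Walk.nil, by simp, ?_⟩
    intro a ha
    rw [SimpleGraph.Walk.support_nil, List.mem_singleton] at ha
    subst ha
    have hu : lvl u = m + 1 := hm u (by simp)
    have huo : u ≠ o := by intro e; rw [e, hroot] at hu; omega
    have := hlvl u huo
    omega
  | @cons u b v hadj rest ih =>
    intro m hm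
    have hu : lvl u = m + 1 := hm u (by simp)
    have hrest : ∀ a ∈ rest.support, lvl a = m + 1 := by
      intro a ha
      exact hm a (by rw [SimpleGraph.Walk.support_cons]; exact List.mem_cons_of_mem _ ha)
    have hb : lvl b = m + 1 := hrest b rest.start_mem_support
    have hEhub : Eh u b := by
      rcases horiz_of_adj hroot hlvl hadj (by omega) with h' | h'
      · exact h'
      · exact hEhsymm h'
    obtain ⟨w', hw1, hw2⟩ := ih m hrest
    have huo : u ≠ o := by intro e; rw [e, hroot] at hu; omega
    have hpu : lvl (p u) = m := by have := hlvl u huo; omega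
    rcases (hEh u b hEhub).2 with h' | h'
    · refine ⟨w'.copy h'.symm rfl, ?_, ?_⟩
      · rw [SimpleGraph.Walk.length_copy, SimpleGraph.Walk.length_cons]; omega
      · intro a ha
        rw [SimpleGraph.Walk.support_copy] at ha
        exact hw2 a ha
    · have hne : p u ≠ p b := by
        intro e; exact hEhne _ (e ▸ h')
      refine ⟨SimpleGraph.Walk.cons (aug_adj_iff.mpr ⟨hne, Or.inr (Or.inr (Or.inl h'))⟩) w', ?_, ?_⟩
      · rw [SimpleGraph.Walk.length_cons, SimpleGraph.Walk.length_cons]; omega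
      · intro a ha
        rw [SimpleGraph.Walk.support_cons, List.mem_cons] at ha
        rcases ha with ha | ha
        · rw [ha]; exact hpu
        · exact hw2 a ha

private lemma horiz_project_iter (hroot : lvl o = 0)
    (hlvl : ∀ x, x ≠ o → lvl (p x) + 1 = lvl x)
    (hEhsymm : Symmetric Eh)
    (hEh : ∀ x y, Eh x y → lvl x = lvl y ∧ (p x = p y ∨ Eh (p x) (p y)))
    (hEhne : ∀ x, ¬ Eh x x) :
    ∀ (k : ℕ) {u v : X} (w : (augmentedGraph p Eh).Walk u v) (m : ℕ),
      (∀ a ∈ w.support, lvl a = k + m) →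
      ∃ w' : (augmentedGraph p Eh).Walk (p^[k] u) (p^[k] v),
        w'.length ≤ w.length ∧ ∀ a ∈ w'.support, lvl a = m := by
  intro k
  induction k with
  | zero => intro u v w m hm; exact ⟨w, le_refl _, by simpa using hm⟩
  | succ k ih =>
    intro u v w m hm
    obtain ⟨w1, h1, h2⟩ := ih w (m + 1) (by intro a ha; have := hm a ha; omega)
    obtain ⟨w2, h3, h4⟩ := horiz_project hroot hlvl hEhsymm hEh hEhne w1 m h2
    exact ⟨w2.copy (Function.iterate_succ_apply' p k u).symm
        (Function.iterate_succ_apply' p k v).symm,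
      by rw [SimpleGraph.Walk.length_copy]; omega,
      by intro a ha; rw [SimpleGraph.Walk.support_copy] at ha; exact h4 a ha⟩

private lemma main_ind (hroot : lvl o = 0) (hproot : p o = o)
    (hlvl : ∀ x, x ≠ o → lvl (p x) + 1 = lvl x)
    (hEhsymm : Symmetric Eh)
    (hEh : ∀ x y, Eh x y → lvl x = lvl y ∧ (p x = p y ∨ Eh (p x) (p y)))
    (hEhne : ∀ x, ¬ Eh x x) :
    ∀ {x y : X} (w : (augmentedGraph p Eh).Walk x y),
      ∃ (l a c : ℕ) (h : (augmentedGraph p Eh).Walk (p^[a] x) (p^[c] y)),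
        l + a = lvl x ∧ l + c = lvl y ∧ (∀ v ∈ h.support, lvl v = l) ∧
        a + h.length + c ≤ w.length := by
  intro x y w
  induction w with
  | @nil x =>
    exact ⟨lvl x, 0, 0, SimpleGraph.Walk.nil, by simp, by simp, by simp, by simp⟩
  | @cons x b y hadj rest ih =>
    obtain ⟨l, a, c, h, hla, hlc, hsup, hlen⟩ := ih
    obtain ⟨hne, h2⟩ := aug_adj_iff.mp hadj
    have h2' : p x = b ∨ p b = x ∨ Eh x b := by
      rcases h2 with hv | hv | hv | hv
      · exact Or.inl hv
      · exact Or.inr (Or.inl hv)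
      · exact Or.inr (Or.inr hv)
      · exact Or.inr (Or.inr (hEhsymm hv))
    clear h2
    rcases h2' with hv | hv | hv
    · -- p x = b : going up
      have hxo : x ≠ o := by
        intro e; apply hne; rw [e] at hv ⊢; rw [hproot] at hv; exact hv
      have hx : lvl b + 1 = lvl x := by
        have := hlvl x hxo; rw [hv] at this; exact this
      refine ⟨l, a + 1, c,
        h.copy (show p^[a] b = p^[a+1] x by rw [Function.iterate_succ_apply, hv]) rfl,
        by omega, hlc,
        by intro v hvv; rw [SimpleGraph.Walk.support_copy] at hvv; exact hsup v hvv, ?_⟩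
      rw [SimpleGraph.Walk.length_copy, SimpleGraph.Walk.length_cons]
      omega
    · -- p b = x : going down
      have hbo : b ≠ o := by
        intro e; apply hne; rw [e] at hv; rw [e, ← hv, hproot]
      have hbx : lvl x + 1 = lvl b := by
        have := hlvl b hbo; rw [hv] at this; exact this
      obtain _ | a := a
      · -- a = 0 : project the horizontal walk down one level
        have hl : l = lvl b := by omega
        have hsup' : ∀ v ∈ h.support, lvl v = lvl x + 1 := by
          intro v hvv; rw [hsup v hvv]; omega
        obtain ⟨w', hw1, hw2⟩ :=
          horiz_project hroot hlvl hEhsymm hEh hEhne h (lvl x) hsup'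
        refine ⟨lvl x, 0, c + 1,
          w'.copy (show p (p^[0] b) = p^[0] x by simp [hv])
            (Function.iterate_succ_apply' p c y).symm,
          by simp, by omega,
          by intro v hvv; rw [SimpleGraph.Walk.support_copy] at hvv; exact hw2 v hvv, ?_⟩
        rw [SimpleGraph.Walk.length_copy, SimpleGraph.Walk.length_cons]
        omega
      · -- a = a' + 1 : cancel
        refine ⟨l, a, c,
          h.copy (show p^[a+1] b = p^[a] x by rw [Function.iterate_succ_apply, hv]) rfl,
          by omega, hlc,
          by intro v hvv; rw [SimpleGraph.Walk.support_copy] at hvv; exact hsup v hvv, ?_⟩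
        rw [SimpleGraph.Walk.length_copy, SimpleGraph.Walk.length_cons]
        omega
    · -- Eh x b : horizontal
      have hlxb : lvl x = lvl b := (hEh x b hv).1
      rcases eh_iterate hEh a hv with he | he
      · exact ⟨l, a, c, h.copy he.symm rfl, by omega, hlc,
          by intro v hvv; rw [SimpleGraph.Walk.support_copy] at hvv; exact hsup v hvv,
          by rw [SimpleGraph.Walk.length_copy, SimpleGraph.Walk.length_cons]; omega⟩
      · have hne2 : p^[a] x ≠ p^[a] b := by
          intro e; exact hEhne _ (e ▸ he)
        refine ⟨l, a, c,
          SimpleGraph.Walk.cons (aug_adj_iff.mpr ⟨hne2, Or.inr (Or.inr (Or.inl he))⟩) h,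
          by omega, hlc, ?_, ?_⟩
        · intro v hvv
          rw [SimpleGraph.Walk.support_cons, List.mem_cons] at hvv
          rcases hvv with hvv | hvv
          · rw [hvv, (hEh _ _ he).1]
            exact hsup _ h.start_mem_support
          · exact hsup v hvv
        · rw [SimpleGraph.Walk.length_cons, SimpleGraph.Walk.length_cons]; omega

private lemma geodesic_decomp (hroot : lvl o = 0) (hproot : p o = o)
    (hlvl : ∀ x, x ≠ o → lvl (p x) + 1 = lvl x)
    (hEhsymm : Symmetric Eh)
    (hEh : ∀ x y, Eh x y → lvl x = lvl y ∧ (p x = p y ∨ Eh (p x) (p y)))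
    (hEhne : ∀ x, ¬ Eh x x)
    (hconn : (augmentedGraph p Eh).Connected)
    (M : ℕ)
    (hgeo : ∀ (x y : X) (wk : (augmentedGraph p Eh).Walk x y),
      wk.length = (augmentedGraph p Eh).dist x y →
      (∀ v ∈ wk.support, lvl v = lvl x) → wk.length ≤ M)
    (x y : X) :
    ∃ (l a c : ℕ) (h : (augmentedGraph p Eh).Walk (p^[a] x) (p^[c] y)),
      l + a = lvl x ∧ l + c = lvl y ∧ (∀ v ∈ h.support, lvl v = l) ∧
      (augmentedGraph p Eh).dist x y = a + h.length + c ∧ h.length ≤ M := by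
  obtain ⟨w, hw⟩ := hconn.exists_walk_length_eq_dist x y
  obtain ⟨l, a, c, h, hla, hlc, hsup, hlen⟩ :=
    main_ind hroot hproot hlvl hEhsymm hEh hEhne w
  obtain ⟨d1, hd1⟩ := descent_walk (Eh := Eh) hroot hlvl a (x := x) (by omega)
  obtain ⟨d2, hd2⟩ := descent_walk (Eh := Eh) hroot hlvl c (x := y) (by omega)
  have hub : (augmentedGraph p Eh).dist x y ≤ a + h.length + c := by
    have := SimpleGraph.dist_le (d1.append (h.append d2.reverse))
    simp only [SimpleGraph.Walk.length_append, SimpleGraph.Walk.length_reverse,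
      hd1, hd2] at this
    omega
  have heq : (augmentedGraph p Eh).dist x y = a + h.length + c := by omega
  have h2 : (augmentedGraph p Eh).dist x (p^[a] x) ≤ a := by
    have := SimpleGraph.dist_le d1; omega
  have h3 : (augmentedGraph p Eh).dist (p^[c] y) y ≤ c := by
    have := SimpleGraph.dist_le d2.reverse
    rw [SimpleGraph.Walk.length_reverse] at this; omega
  have h4 : (augmentedGraph p Eh).dist x y ≤
      (augmentedGraph p Eh).dist x (p^[a] x) +
      ((augmentedGraph p Eh).dist (p^[a] x) (p^[c] y) +
        (augmentedGraph p Eh).dist (p^[c] y) y) := by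
    calc (augmentedGraph p Eh).dist x y ≤
        (augmentedGraph p Eh).dist x (p^[a] x) +
          (augmentedGraph p Eh).dist (p^[a] x) y := hconn.dist_triangle
      _ ≤ _ := by
        have := hconn.dist_triangle (u := p^[a] x) (v := p^[c] y) (w := y)
        omega
  have h1 : (augmentedGraph p Eh).dist (p^[a] x) (p^[c] y) ≤ h.length :=
    SimpleGraph.dist_le h
  have hmid : h.length = (augmentedGraph p Eh).dist (p^[a] x) (p^[c] y) := by omega
  have hM : h.length ≤ M := by
    refine hgeo _ _ h hmid ?_
    intro v hvv
    rw [hsup v hvv, hsup _ h.start_mem_support]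
  exact ⟨l, a, c, h, hla, hlc, hsup, heq, hM⟩

end Aux

/-- Hyperbolicity criterion for augmented trees: if horizontal geodesics have
uniformly bounded length `M`, then the augmented tree is Gromov hyperbolic. -/
theorem augmentedTree_hyperbolic_of_bounded_horizontal_geodesics
    {X : Type*} (o : X) (p : X → X) (lvl : X → ℕ) (Eh : X → X → Prop)
    (hEhsymm : Symmetric Eh)
    (hEh : ∀ x y, Eh x y → lvl x = lvl y ∧ (p x = p y ∨ Eh (p x) (p y)))
    (hEhne : ∀ x, ¬ Eh x x)
    (hroot : lvl o = 0) (hproot : p o = o)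
    (hlvl : ∀ x, x ≠ o → lvl (p x) + 1 = lvl x)
    (hconn : (augmentedGraph p Eh).Connected)
    (M : ℕ)
    (hgeo : ∀ (x y : X) (wk : (augmentedGraph p Eh).Walk x y),
      wk.length = (augmentedGraph p Eh).dist x y →
      (∀ v ∈ wk.support, lvl v = lvl x) → wk.length ≤ M) :
    ∃ δ : ℝ, 0 ≤ δ ∧ ∀ x y z : X,
      min ((((augmentedGraph p Eh).dist o x : ℝ) + ((augmentedGraph p Eh).dist o z : ℝ)
            - ((augmentedGraph p Eh).dist x z : ℝ)) / 2)
          ((((augmentedGraph p Eh).dist o z : ℝ) + ((augmentedGraph p Eh).dist o y : ℝ)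
            - ((augmentedGraph p Eh).dist z y : ℝ)) / 2) - δ ≤
        (((augmentedGraph p Eh).dist o x : ℝ) + ((augmentedGraph p Eh).dist o y : ℝ)
            - ((augmentedGraph p Eh).dist x y : ℝ)) / 2 := by
  refine ⟨(M : ℝ), Nat.cast_nonneg M, ?_⟩
  intro x y z
  obtain ⟨l₁, a₁, c₁, h₁, hx1, hz1, hs1, hd1, hb1⟩ :=
    geodesic_decomp hroot hproot hlvl hEhsymm hEh hEhne hconn M hgeo x z
  obtain ⟨l₂, a₂, c₂, h₂, hz2, hy2, hs2, hd2, hb2⟩ :=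
    geodesic_decomp hroot hproot hlvl hEhsymm hEh hEhne hconn M hgeo z y
  set n := min l₁ l₂ with hn
  have hn1 : n ≤ l₁ := min_le_left _ _
  have hn2 : n ≤ l₂ := min_le_right _ _
  -- project the two horizontal geodesics down to level n
  obtain ⟨w₁, hw1len, hw1sup⟩ :=
    horiz_project_iter hroot hlvl hEhsymm hEh hEhne (l₁ - n) h₁ n
      (by intro v hv; rw [hs1 v hv]; omega)
  obtain ⟨w₂, hw2len, hw2sup⟩ :=
    horiz_project_iter hroot hlvl hEhsymm hEh hEhne (l₂ - n) h₂ n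
      (by intro v hv; rw [hs2 v hv]; omega)
  -- endpoints of the projected walks
  have e1 : p^[l₁ - n] (p^[a₁] x) = p^[(l₁ - n) + a₁] x :=
    (Function.iterate_add_apply p (l₁ - n) a₁ x).symm
  have e2 : p^[l₁ - n] (p^[c₁] z) = p^[(l₁ - n) + c₁] z :=
    (Function.iterate_add_apply p (l₁ - n) c₁ z).symm
  have e3 : p^[l₂ - n] (p^[a₂] z) = p^[(l₂ - n) + a₂] z :=
    (Function.iterate_add_apply p (l₂ - n) a₂ z).symm
  have e4 : p^[l₂ - n] (p^[c₂] y) = p^[(l₂ - n) + c₂] y :=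
    (Function.iterate_add_apply p (l₂ - n) c₂ y).symm
  have emid : (l₁ - n) + c₁ = (l₂ - n) + a₂ := by omega
  -- build a walk from x to y through level n
  obtain ⟨d1, hd1'⟩ := descent_walk (Eh := Eh) hroot hlvl ((l₁ - n) + a₁) (x := x) (by omega)
  obtain ⟨d2, hd2'⟩ := descent_walk (Eh := Eh) hroot hlvl ((l₂ - n) + c₂) (x := y) (by omega)
  have hdxy : (augmentedGraph p Eh).dist x y ≤
      ((l₁ - n) + a₁) + (w₁.length + (w₂.length + ((l₂ - n) + c₂))) := by
    have := SimpleGraph.dist_le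
      (d1.append ((w₁.copy e1 (e2.trans (by rw [emid]))).append
        ((w₂.copy e3 e4).append d2.reverse)))
    simp only [SimpleGraph.Walk.length_append, SimpleGraph.Walk.length_reverse,
      SimpleGraph.Walk.length_copy, hd1', hd2'] at this
    exact this
  -- key numeric inequalities (in ℕ)
  have k1 : lvl x + lvl z ≤ 2 * l₁ + (augmentedGraph p Eh).dist x z := by omega
  have k2 : lvl z + lvl y ≤ 2 * l₂ + (augmentedGraph p Eh).dist z y := by omega
  have k3 : (augmentedGraph p Eh).dist x y + 2 * n ≤ lvl x + lvl y + 2 * M := by omega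
  -- rewrite distances from the root
  rw [dist_root hroot hproot hlvl hEh hconn x, dist_root hroot hproot hlvl hEh hconn y,
    dist_root hroot hproot hlvl hEh hconn z]
  -- pass to ℝ
  have k1' : (lvl x : ℝ) + lvl z ≤ 2 * l₁ + ((augmentedGraph p Eh).dist x z : ℝ) := by
    exact_mod_cast k1
  have k2' : (lvl z : ℝ) + lvl y ≤ 2 * l₂ + ((augmentedGraph p Eh).dist z y : ℝ) := by
    exact_mod_cast k2
  have k3' : ((augmentedGraph p Eh).dist x y : ℝ) + 2 * n ≤ (lvl x : ℝ) + lvl y + 2 * M := by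
    exact_mod_cast k3
  have hmin : min (((lvl x : ℝ) + (lvl z : ℝ) - ((augmentedGraph p Eh).dist x z : ℝ)) / 2)
      (((lvl z : ℝ) + (lvl y : ℝ) - ((augmentedGraph p Eh).dist z y : ℝ)) / 2) ≤ (n : ℝ) := by
    rcases min_le_iff.mpr (Or.inl (le_refl (l₁ : ℝ))) with _
    rcases le_total l₁ l₂ with hc | hc
    · have hne : n = l₁ := by omega
      calc min _ _ ≤ ((lvl x : ℝ) + (lvl z : ℝ) - ((augmentedGraph p Eh).dist x z : ℝ)) / 2 :=
            min_le_left _ _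
        _ ≤ (l₁ : ℝ) := by linarith
        _ = (n : ℝ) := by rw [hne]
    · have hne : n = l₂ := by omega
      calc min _ _ ≤ ((lvl z : ℝ) + (lvl y : ℝ) - ((augmentedGraph p Eh).dist z y : ℝ)) / 2 :=
            min_le_right _ _
        _ ≤ (l₂ : ℝ) := by linarith
        _ = (n : ℝ) := by rw [hne]
  linarith
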